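/- Let D_tx and D_rx be nonempty finite sets of natural numbers, and let S be a subset of D_tx such that S + D_rx = D_tx + D_rx. Then the minimum element of D_tx and the maximum element of D_tx both belong to S. -/
import Mathlib


open Finset Pointwise

theorem stmt_0 (Dtx Drx : Finset ℕ) (htx : Dtx.Nonempty) (hrx : Drx.Nonempty)
    (S : Finset ℕ) (hS : S ⊆ Dtx) (hsum : S + Drx = Dtx + Drx) :
    Dtx.min' htx ∈ S ∧ Dtx.max' htx ∈ S := by
  constructor
  · have hmem : Dtx.min' htx + Drx.min' hrx ∈ S + Drx := by
      rw [hsum]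
      exact add_mem_add (min'_mem _ _) (min'_mem _ _)
    rw [Finset.mem_add] at hmem
    obtain ⟨s, hs, r, hr, heq⟩ := hmem
    have h1 : Dtx.min' htx ≤ s := min'_le _ _ (hS hs)
    have h2 : Drx.min' hrx ≤ r := min'_le _ _ hr
    have : s = Dtx.min' htx := by omega
    rwa [← this]
  · have hmem : Dtx.max' htx + Drx.max' hrx ∈ S + Drx := by
      rw [hsum]
      exact add_mem_add (max'_mem _ _) (max'_mem _ _)
    rw [Finset.mem_add] at hmem
    obtain ⟨s, hs, r, hr, heq⟩ := hmem
    have h1 : s ≤ Dtx.max' htx := le_max' _ _ (hS hs)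
    have h2 : r ≤ Drx.max' hrx := le_max' _ _ hr
    have : s = Dtx.max' htx := by omega
    rwa [← this]
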